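/- Lex-optimal MD strategies are locally lex-optimal: Let Ω be an absorbing lex-objective. If σ is a lex-optimal MD strategy of Max for Ω and τ is an MD lex-optimal counter-strategy of Min against σ, then both σ and τ are locally lex-optimal. -/

import Mathlib

open scoped Classical

/-! ### Lexicographic order on vectors -/

/-- `lexLe x y`: `x ≤_lex y`, i.e. `x = y` or `x i < y i` at the first index `i`
where `x` and `y` differ. -/
def lexLe {n : ℕ} {α : Type*} [LinearOrder α] (x y : Fin n → α) : Prop :=
  x = y ∨ ∃ i, (∀ j, j < i → x j = y j) ∧ x i < y i

/-- Strict lexicographic order. -/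
def lexLt {n : ℕ} {α : Type*} [LinearOrder α] (x y : Fin n → α) : Prop :=
  lexLe x y ∧ x ≠ y

/-- `v` is an upper bound of `X` w.r.t. the lexicographic order. -/
def IsLexUB {n : ℕ} {α : Type*} [LinearOrder α] (X : Set (Fin n → α)) (v : Fin n → α) : Prop :=
  ∀ x ∈ X, lexLe x v

def IsLexLB {n : ℕ} {α : Type*} [LinearOrder α] (X : Set (Fin n → α)) (v : Fin n → α) : Prop :=
  ∀ x ∈ X, lexLe v x

/-- `v` is the least upper bound (supremum) of `X` w.r.t. the lexicographic order. -/
def IsLexLUB {n : ℕ} {α : Type*} [LinearOrder α] (X : Set (Fin n → α)) (v : Fin n → α) : Prop :=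
  IsLexUB X v ∧ ∀ u, IsLexUB X u → lexLe v u

/-- `v` is the greatest lower bound (infimum) of `X` w.r.t. the lexicographic order. -/
def IsLexGLB {n : ℕ} {α : Type*} [LinearOrder α] (X : Set (Fin n → α)) (v : Fin n → α) : Prop :=
  IsLexLB X v ∧ ∀ u, IsLexLB X u → lexLe u v

/-! ### Stochastic games -/

/-- A (simple) stochastic game over a finite state space `S` and a finite label set `L`:
a partition of states into Max-states and Min-states, finitely many available actions
at every state, and a transition probability function. -/
structure SG (S L : Type) [Fintype S] [Fintype L] where
  isMax : S → Prop
  Act : S → Finset L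
  act_nonempty : ∀ s, (Act s).Nonempty
  P : S → L → S → ℝ
  P_nonneg : ∀ s a s', 0 ≤ P s a s'
  P_sum : ∀ s, ∀ a ∈ Act s, ∑ s', P s a s' = 1

variable {S L : Type} [Fintype S] [DecidableEq S] [Fintype L] [DecidableEq L]

/-- A (randomized, history-dependent) strategy: a map from finite histories
`(S × L)* × S` to probability distributions over the available actions. -/
structure Strategy (G : SG S L) where
  prob : List (S × L) → S → L → ℝ
  nonneg : ∀ h s a, 0 ≤ prob h s a
  sum_one : ∀ h s, ∑ a ∈ G.Act s, prob h s a = 1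
  supp : ∀ h s a, a ∉ G.Act s → prob h s a = 0

/-- A strategy is memoryless if it only depends on the current state. -/
def Strategy.Memoryless {G : SG S L} (σ : Strategy G) : Prop :=
  ∀ h h' s, σ.prob h s = σ.prob h' s

/-- A strategy is deterministic if every choice is Dirac. -/
def Strategy.Deterministic {G : SG S L} (σ : Strategy G) : Prop :=
  ∀ h s, ∃ a, σ.prob h s a = 1

/-- Memoryless deterministic strategies. -/
def Strategy.MD {G : SG S L} (σ : Strategy G) : Prop :=
  σ.Memoryless ∧ σ.Deterministic

/-- The probability that action `a` is played at state `s` after history `h`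
when Max plays `σ` and Min plays `τ`. -/
noncomputable def stepProb (G : SG S L) (σ τ : Strategy G) (h : List (S × L)) (s : S)
    (a : L) : ℝ :=
  if G.isMax s then σ.prob h s a else τ.prob h s a

/-- Probability, in the Markov chain induced by `σ` and `τ`, of reaching the set `T`
within `k` steps, starting at state `s` with history `h`. -/
noncomputable def reachAux (G : SG S L) (σ τ : Strategy G) (T : Finset S) :
    ℕ → List (S × L) → S → ℝ
  | 0, _, s => if s ∈ T then 1 else 0
  | k + 1, h, s =>
      if s ∈ T then 1
      else ∑ a ∈ G.Act s, stepProb G σ τ h s a *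
        ∑ s', G.P s a s' * reachAux G σ τ T k (h ++ [(s, a)]) s'

/-- `P_{h,s}^{σ,τ}(Reach T)`: the probability of the reachability property `Reach T`
(the measure of the set of infinite paths that eventually visit `T`), obtained as the
supremum of the step-bounded reachability probabilities. -/
noncomputable def PReach (G : SG S L) (σ τ : Strategy G) (T : Finset S)
    (h : List (S × L)) (s : S) : ℝ :=
  ⨆ k : ℕ, reachAux G σ τ T k h s

/-- Probability of `A Until t` (reach `t` while only visiting states of `A` before)
within `k` steps. -/
noncomputable def untilAux (G : SG S L) (σ τ : Strategy G) (A : Finset S) (t : S) :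
    ℕ → List (S × L) → S → ℝ
  | 0, _, s => if s = t then 1 else 0
  | k + 1, h, s =>
      if s = t then 1
      else if s ∈ A then
        ∑ a ∈ G.Act s, stepProb G σ τ h s a *
          ∑ s', G.P s a s' * untilAux G σ τ A t k (h ++ [(s, a)]) s'
      else 0

/-- `P_{h,s}^{σ,τ}(A Until t)`. -/
noncomputable def PUntil (G : SG S L) (σ τ : Strategy G) (A : Finset S) (t : S)
    (h : List (S × L)) (s : S) : ℝ :=
  ⨆ k : ℕ, untilAux G σ τ A t k h s

/-- Objectives: reachability `Reach T`, safety `Safe T`, and their quantified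
versions given by a weight function `q` on a target set `S'`. -/
inductive Obj (S : Type) where
  | reach (T : Finset S)
  | safe (T : Finset S)
  | qreach (S' : Finset S) (q : S → ℝ)
  | qsafe (S' : Finset S) (q : S → ℝ)

/-- The target set of an objective. -/
def Obj.targets {S : Type} : Obj S → Finset S
  | .reach T => T
  | .safe T => T
  | .qreach S' _ => S'
  | .qsafe S' _ => S'

/-- Plain (non-quantified) objectives: `Reach T` or `Safe T`. -/
def Obj.Plain {S : Type} : Obj S → Prop
  | .reach _ => True
  | .safe _ => True
  | _ => False

/-- Reachability-type objectives. -/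
def Obj.IsReach {S : Type} : Obj S → Prop
  | .reach _ => True
  | .qreach _ _ => True
  | _ => False

/-- `P_{h,s}^{σ,τ}(Ω)` for a single objective `Ω`. -/
noncomputable def objProb (G : SG S L) (σ τ : Strategy G) (h : List (S × L)) (s : S) :
    Obj S → ℝ
  | .reach T => PReach G σ τ T h s
  | .safe T => 1 - PReach G σ τ T h s
  | .qreach S' q => ∑ t ∈ S', PUntil G σ τ S'ᶜ t h s * q t
  | .qsafe S' q => 1 - ∑ t ∈ S', PUntil G σ τ S'ᶜ t h s * q t

/-- The vector `(P_{h,s}^{σ,τ}(Ω_1),…,P_{h,s}^{σ,τ}(Ω_n))`. -/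
noncomputable def payoff (G : SG S L) {n : ℕ} (Ω : Fin n → Obj S) (σ τ : Strategy G)
    (h : List (S × L)) (s : S) : Fin n → ℝ :=
  fun i => objProb G σ τ h s (Ω i)

/-- The set of payoff vectors achievable by Min against a fixed `σ` from state `s`. -/
def minPayoffs (G : SG S L) {n : ℕ} (Ω : Fin n → Obj S) (σ : Strategy G) (s : S) :
    Set (Fin n → ℝ) :=
  {y | ∃ τ : Strategy G, y = payoff G Ω σ τ [] s}

/-- The set of payoff vectors achievable by Max against a fixed `τ` from state `s`. -/
def maxPayoffs (G : SG S L) {n : ℕ} (Ω : Fin n → Obj S) (τ : Strategy G) (s : S) :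
    Set (Fin n → ℝ) :=
  {y | ∃ σ : Strategy G, y = payoff G Ω σ τ [] s}

/-- `v` is the (lower) lex-value `sup_σ inf_τ P_s^{σ,τ}(Ω)` of state `s`, where the
suprema and infima are taken w.r.t. the lexicographic order. -/
def IsLexValue (G : SG S L) {n : ℕ} (Ω : Fin n → Obj S) (s : S) (v : Fin n → ℝ) : Prop :=
  IsLexLUB {x | ∃ σ : Strategy G, IsLexGLB (minPayoffs G Ω σ s) x} v

/-- `v` is the upper lex-value `inf_τ sup_σ P_s^{σ,τ}(Ω)` of state `s`. -/
def IsLexValueUpper (G : SG S L) {n : ℕ} (Ω : Fin n → Obj S) (s : S) (v : Fin n → ℝ) :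
    Prop :=
  IsLexGLB {x | ∃ τ : Strategy G, IsLexLUB (maxPayoffs G Ω τ s) x} v

/-- `σ` is a lex-optimal strategy of Max: from every state `s` (with empty history) it
guarantees the lex-value `v s` against every strategy of Min,
i.e. `inf_τ P_s^{σ,τ}(Ω) = v s` in the lexicographic order. -/
def MaxOptimal (G : SG S L) {n : ℕ} (Ω : Fin n → Obj S) (σ : Strategy G)
    (v : S → Fin n → ℝ) : Prop :=
  ∀ s, IsLexGLB (minPayoffs G Ω σ s) (v s)

/-- `τ` is a lex-optimal strategy of Min: `sup_σ P_s^{σ,τ}(Ω) = v s`. -/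
def MinOptimal (G : SG S L) {n : ℕ} (Ω : Fin n → Obj S) (τ : Strategy G)
    (v : S → Fin n → ℝ) : Prop :=
  ∀ s, IsLexLUB (maxPayoffs G Ω τ s) (v s)

/-- `τ` is a lex-optimal counter-strategy against `σ`:
`P_s^{σ,τ}(Ω) = inf_{τ'} P_s^{σ,τ'}(Ω)` for every `s`. -/
def OptimalCounter (G : SG S L) {n : ℕ} (Ω : Fin n → Obj S) (σ τ : Strategy G) : Prop :=
  ∀ s, IsLexGLB (minPayoffs G Ω σ s) (payoff G Ω σ τ [] s)

/-- A state is absorbing (a sink) if all its actions self-loop with probability 1. -/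
def SG.Absorbing (G : SG S L) (s : S) : Prop := ∀ a ∈ G.Act s, G.P s a s = 1

/-- A lex-objective is absorbing if all its target sets consist of sinks only. -/
def AbsorbingObj (G : SG S L) {n : ℕ} (Ω : Fin n → Obj S) : Prop :=
  ∀ i, ∀ t ∈ (Ω i).targets, G.Absorbing t

/-- The lex-value of action `a` at state `s`: `v(s,a) = Σ_{s'} P(s,a,s')·v(s')`. -/
noncomputable def actionVal (G : SG S L) {n : ℕ} (v : S → Fin n → ℝ) (s : S) (a : L) :
    Fin n → ℝ :=
  fun i => ∑ s', G.P s a s' * v s' i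

/-- Action `a` is lex-optimal at `s`: its lex-value is maximal among the available
actions if `s` is a Max-state, and minimal if `s` is a Min-state. -/
def OptAction (G : SG S L) {n : ℕ} (v : S → Fin n → ℝ) (s : S) (a : L) : Prop :=
  (G.isMax s → ∀ b ∈ G.Act s, lexLe (actionVal G v s b) (actionVal G v s a)) ∧
  (¬ G.isMax s → ∀ b ∈ G.Act s, lexLe (actionVal G v s a) (actionVal G v s b))

/-- A strategy of Max is locally lex-optimal if at Max-states it only assigns positive
probability to lex-optimal actions. -/
def LocallyOptMax (G : SG S L) {n : ℕ} (v : S → Fin n → ℝ) (σ : Strategy G) : Prop :=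
  ∀ h s a, G.isMax s → 0 < σ.prob h s a → OptAction G v s a

/-- A strategy of Min is locally lex-optimal if at Min-states it only assigns positive
probability to lex-optimal actions. -/
def LocallyOptMin (G : SG S L) {n : ℕ} (v : S → Fin n → ℝ) (τ : Strategy G) : Prop :=
  ∀ h s a, ¬ G.isMax s → 0 < τ.prob h s a → OptAction G v s a

/-- `Zero_i = {s ∈ S : v_i(s) = 0}`. -/
noncomputable def zeroSet {n : ℕ} (v : S → Fin n → ℝ) (i : Fin n) : Finset S :=
  Finset.univ.filter (fun s => v s i = 0)

/-- The final set `F = ⋃_{k∈R} S_k ∪ ⋂_{k∈R} Zero_k`, where `R` is the set of indices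
of reachability objectives (with `F = S` when `R = ∅`). -/
noncomputable def finalSet {n : ℕ} (Ω : Fin n → Obj S) (v : S → Fin n → ℝ) : Finset S :=
  ((Finset.univ.filter (fun i => (Ω i).IsReach)).biUnion fun i => (Ω i).targets) ∪
    Finset.univ.filter fun s => ∀ i, (Ω i).IsReach → v s i = 0

/-! ### Auxiliary lemmas -/

section AuxLemmas
set_option linter.unusedSectionVars false

open Filter Topology

variable {n : ℕ}

theorem lexLe_refl {α : Type*} [LinearOrder α] (x : Fin n → α) : lexLe x x := Or.inl rfl

theorem lexLe_trans {α : Type*} [LinearOrder α] {x y z : Fin n → α}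
    (h1 : lexLe x y) (h2 : lexLe y z) : lexLe x z := by
  rcases h1 with rfl | ⟨i, hji, hi⟩
  · exact h2
  rcases h2 with rfl | ⟨i', hji', hi'⟩
  · exact Or.inr ⟨i, hji, hi⟩
  rcases lt_trichotomy i i' with h | rfl | h
  · exact Or.inr ⟨i, fun j hj => (hji j hj).trans (hji' j (hj.trans h)),
      hi.trans_eq (hji' i h)⟩
  · exact Or.inr ⟨i, fun j hj => (hji j hj).trans (hji' j hj), hi.trans hi'⟩
  · exact Or.inr ⟨i', fun j hj => (hji j (hj.trans h)).trans (hji' j hj),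
      (hji i' h).trans_lt hi'⟩

theorem lexLe_antisymm {α : Type*} [LinearOrder α] {x y : Fin n → α}
    (h1 : lexLe x y) (h2 : lexLe y x) : x = y := by
  rcases h1 with rfl | ⟨i, hji, hi⟩
  · rfl
  rcases h2 with rfl | ⟨i', hji', hi'⟩
  · rfl
  exfalso
  rcases lt_trichotomy i i' with h | rfl | h
  · exact hi.ne (hji' i h).symm
  · exact lt_asymm hi hi'
  · exact hi'.ne (hji i' h).symm

theorem lexLe_add {x y x' y' : Fin n → ℝ} (h1 : lexLe x y) (h2 : lexLe x' y') :
    lexLe (fun i => x i + x' i) (fun i => y i + y' i) := by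
  rcases h1 with rfl | ⟨i, hji, hi⟩
  · rcases h2 with rfl | ⟨i', hji', hi'⟩
    · exact Or.inl rfl
    · exact Or.inr ⟨i', fun j hj => by dsimp only; rw [hji' j hj],
        by dsimp only; exact add_lt_add_right hi' _⟩
  rcases h2 with rfl | ⟨i', hji', hi'⟩
  · exact Or.inr ⟨i, fun j hj => by dsimp only; rw [hji j hj],
      by dsimp only; exact add_lt_add_left hi _⟩
  rcases lt_trichotomy i i' with h | rfl | h
  · exact Or.inr ⟨i, fun j hj => by dsimp only; rw [hji j hj, hji' j (hj.trans h)],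
      by dsimp only; rw [hji' i h]; exact add_lt_add_left hi _⟩
  · exact Or.inr ⟨i, fun j hj => by dsimp only; rw [hji j hj, hji' j hj],
      by dsimp only; exact add_lt_add hi hi'⟩
  · exact Or.inr ⟨i', fun j hj => by dsimp only; rw [hji j (hj.trans h), hji' j hj],
      by dsimp only; rw [hji i' h]; exact add_lt_add_right hi' _⟩

theorem lexLe_smul {c : ℝ} (hc : 0 ≤ c) {x y : Fin n → ℝ} (h : lexLe x y) :
    lexLe (fun i => c * x i) (fun i => c * y i) := by
  rcases h with rfl | ⟨i, hji, hi⟩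
  · exact Or.inl rfl
  rcases hc.eq_or_lt with rfl | hc
  · exact Or.inl (by funext i; simp)
  · exact Or.inr ⟨i, fun j hj => by dsimp only; rw [hji j hj],
      by dsimp only; exact mul_lt_mul_of_pos_left hi hc⟩

theorem lexLe_sum {ι : Type*} (F : Finset ι) (c : ι → ℝ) (x y : ι → Fin n → ℝ)
    (hc : ∀ j ∈ F, 0 ≤ c j) (h : ∀ j ∈ F, lexLe (x j) (y j)) :
    lexLe (fun i => ∑ j ∈ F, c j * x j i) (fun i => ∑ j ∈ F, c j * y j i) := by
  induction F using Finset.cons_induction with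
  | empty => exact Or.inl (funext fun i => by simp)
  | cons a F ha IH =>
    simp only [Finset.sum_cons]
    exact lexLe_add
      (lexLe_smul (hc a (Finset.mem_cons_self _ _)) (h a (Finset.mem_cons_self _ _)))
      (IH (fun j hj => hc j (Finset.mem_cons.2 (Or.inr hj)))
        (fun j hj => h j (Finset.mem_cons.2 (Or.inr hj))))

variable {G : SG S L}

theorem stepProb_nonneg (σ τ : Strategy G) (h : List (S × L)) (s : S) (a : L) :
    0 ≤ stepProb G σ τ h s a := by
  unfold stepProb; split
  exacts [σ.nonneg h s a, τ.nonneg h s a]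

theorem stepProb_sum_one (σ τ : Strategy G) (h : List (S × L)) (s : S) :
    ∑ a ∈ G.Act s, stepProb G σ τ h s a = 1 := by
  unfold stepProb; split
  exacts [σ.sum_one h s, τ.sum_one h s]

theorem reachAux_nonneg (σ τ : Strategy G) (T : Finset S) :
    ∀ k h s, 0 ≤ reachAux G σ τ T k h s := by
  intro k
  induction k with
  | zero => intro h s; simp only [reachAux]; split <;> norm_num
  | succ k IH =>
    intro h s
    simp only [reachAux]
    split
    · norm_num
    · refine Finset.sum_nonneg fun a _ => mul_nonneg (stepProb_nonneg σ τ h s a) ?_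
      exact Finset.sum_nonneg fun s' _ => mul_nonneg (G.P_nonneg s a s') (IH _ _)

theorem reachAux_le_one (σ τ : Strategy G) (T : Finset S) :
    ∀ k h s, reachAux G σ τ T k h s ≤ 1 := by
  intro k
  induction k with
  | zero => intro h s; simp only [reachAux]; split <;> norm_num
  | succ k IH =>
    intro h s
    simp only [reachAux]
    split
    · exact le_refl 1
    · calc ∑ a ∈ G.Act s, stepProb G σ τ h s a *
            ∑ s', G.P s a s' * reachAux G σ τ T k (h ++ [(s, a)]) s'
          ≤ ∑ a ∈ G.Act s, stepProb G σ τ h s a * 1 := by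
            refine Finset.sum_le_sum fun a ha => ?_
            refine mul_le_mul_of_nonneg_left ?_ (stepProb_nonneg σ τ h s a)
            calc ∑ s', G.P s a s' * reachAux G σ τ T k (h ++ [(s, a)]) s'
                ≤ ∑ s', G.P s a s' * 1 :=
                  Finset.sum_le_sum fun s' _ =>
                    mul_le_mul_of_nonneg_left (IH _ _) (G.P_nonneg s a s')
              _ = 1 := by simp [G.P_sum s a ha]
        _ = 1 := by simp [stepProb_sum_one σ τ h s]

theorem reachAux_mono (σ τ : Strategy G) (T : Finset S) :
    ∀ k h s, reachAux G σ τ T k h s ≤ reachAux G σ τ T (k + 1) h s := by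
  intro k
  induction k with
  | zero =>
    intro h s
    simp only [reachAux]
    split
    · exact le_refl 1
    · refine Finset.sum_nonneg fun a _ => mul_nonneg (stepProb_nonneg σ τ h s a) ?_
      refine Finset.sum_nonneg fun s' _ =>
        mul_nonneg (G.P_nonneg s a s') ?_
      split <;> norm_num
  | succ k IH =>
    intro h s
    simp only [reachAux]
    split
    · exact le_refl 1
    · refine Finset.sum_le_sum fun a _ => ?_
      refine mul_le_mul_of_nonneg_left ?_ (stepProb_nonneg σ τ h s a)
      exact Finset.sum_le_sum fun s' _ =>
        mul_le_mul_of_nonneg_left (IH _ _) (G.P_nonneg s a s')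

theorem reachAux_monotone (σ τ : Strategy G) (T : Finset S) (h : List (S × L)) (s : S) :
    Monotone fun k => reachAux G σ τ T k h s :=
  monotone_nat_of_le_succ fun k => reachAux_mono σ τ T k h s

theorem reachAux_bdd (σ τ : Strategy G) (T : Finset S) (h : List (S × L)) (s : S) :
    BddAbove (Set.range fun k => reachAux G σ τ T k h s) :=
  ⟨1, by rintro _ ⟨k, rfl⟩; exact reachAux_le_one σ τ T k h s⟩

theorem tendsto_reachAux (σ τ : Strategy G) (T : Finset S) (h : List (S × L)) (s : S) :
    Tendsto (fun k => reachAux G σ τ T k h s) atTop (𝓝 (PReach G σ τ T h s)) :=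
  tendsto_atTop_ciSup (reachAux_monotone σ τ T h s) (reachAux_bdd σ τ T h s)

theorem PReach_eq (σ τ : Strategy G) (T : Finset S) (h : List (S × L)) (s : S) :
    PReach G σ τ T h s = if s ∈ T then 1 else
      ∑ a ∈ G.Act s, stepProb G σ τ h s a *
        ∑ s', G.P s a s' * PReach G σ τ T (h ++ [(s, a)]) s' := by
  split_ifs with hs
  · have hk : ∀ k, reachAux G σ τ T k h s = 1 := by
      intro k; cases k <;> simp [reachAux, hs]
    simp [PReach, hk]
  · have h1 : Tendsto (fun k => reachAux G σ τ T (k + 1) h s) atTop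
        (𝓝 (PReach G σ τ T h s)) :=
      (tendsto_reachAux σ τ T h s).comp (tendsto_add_atTop_nat 1)
    have h2 : Tendsto (fun k => reachAux G σ τ T (k + 1) h s) atTop
        (𝓝 (∑ a ∈ G.Act s, stepProb G σ τ h s a *
          ∑ s', G.P s a s' * PReach G σ τ T (h ++ [(s, a)]) s')) := by
      have : ∀ k, reachAux G σ τ T (k + 1) h s =
          ∑ a ∈ G.Act s, stepProb G σ τ h s a *
            ∑ s', G.P s a s' * reachAux G σ τ T k (h ++ [(s, a)]) s' := by
        intro k; simp [reachAux, hs]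
      simp only [this]
      exact tendsto_finset_sum _ fun a _ =>
        ((tendsto_finset_sum _ fun s' _ =>
          (tendsto_reachAux σ τ T _ s').const_mul _).const_mul _)
    exact tendsto_nhds_unique h1 h2

theorem reachAux_shift {σ₁ τ₁ σ₂ τ₂ : Strategy G} {h₀ : List (S × L)}
    (hstep : ∀ h s, stepProb G σ₁ τ₁ (h₀ ++ h) s = stepProb G σ₂ τ₂ h s)
    (T : Finset S) : ∀ k h s,
      reachAux G σ₁ τ₁ T k (h₀ ++ h) s = reachAux G σ₂ τ₂ T k h s := by
  intro k
  induction k with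
  | zero => intro h s; rfl
  | succ k IH =>
    intro h s
    simp only [reachAux]
    split
    · rfl
    · refine Finset.sum_congr rfl fun a _ => ?_
      rw [congrFun (hstep h s) a]
      congr 1
      refine Finset.sum_congr rfl fun s' _ => ?_
      rw [List.append_assoc, IH]

theorem PReach_shift {σ₁ τ₁ σ₂ τ₂ : Strategy G} {h₀ : List (S × L)}
    (hstep : ∀ h s, stepProb G σ₁ τ₁ (h₀ ++ h) s = stepProb G σ₂ τ₂ h s)
    (T : Finset S) (h : List (S × L)) (s : S) :
    PReach G σ₁ τ₁ T (h₀ ++ h) s = PReach G σ₂ τ₂ T h s := by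
  unfold PReach
  exact iSup_congr fun k => reachAux_shift hstep T k h s

theorem objProb_shift {σ₁ τ₁ σ₂ τ₂ : Strategy G} {h₀ : List (S × L)}
    (hstep : ∀ h s, stepProb G σ₁ τ₁ (h₀ ++ h) s = stepProb G σ₂ τ₂ h s)
    {o : Obj S} (ho : o.Plain) (h : List (S × L)) (s : S) :
    objProb G σ₁ τ₁ (h₀ ++ h) s o = objProb G σ₂ τ₂ h s o := by
  cases o with
  | reach T => exact PReach_shift hstep T h s
  | safe T => simp only [objProb, PReach_shift hstep T h s]
  | qreach S' q => exact ho.elim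
  | qsafe S' q => exact ho.elim

theorem objProb_unfold (σ τ : Strategy G) {o : Obj S} (ho : o.Plain) {s : S}
    (hs : s ∉ o.targets) (h : List (S × L)) :
    objProb G σ τ h s o = ∑ a ∈ G.Act s, stepProb G σ τ h s a *
      ∑ s', G.P s a s' * objProb G σ τ (h ++ [(s, a)]) s' o := by
  cases o with
  | reach T =>
    simp only [objProb]
    rw [PReach_eq σ τ T h s, if_neg (show s ∉ T from hs)]
  | safe T =>
    have hP := PReach_eq σ τ T h s
    rw [if_neg (show s ∉ T from hs)] at hP
    simp only [objProb]
    rw [hP]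
    have step1 : ∀ a ∈ G.Act s,
        ∑ s', G.P s a s' * (1 - PReach G σ τ T (h ++ [(s, a)]) s')
          = 1 - ∑ s', G.P s a s' * PReach G σ τ T (h ++ [(s, a)]) s' := by
      intro a ha
      simp [mul_sub, Finset.sum_sub_distrib, G.P_sum s a ha]
    calc 1 - ∑ a ∈ G.Act s, stepProb G σ τ h s a *
          ∑ s', G.P s a s' * PReach G σ τ T (h ++ [(s, a)]) s'
        = ∑ a ∈ G.Act s, stepProb G σ τ h s a *
            (1 - ∑ s', G.P s a s' * PReach G σ τ T (h ++ [(s, a)]) s') := by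
          simp [mul_sub, Finset.sum_sub_distrib, stepProb_sum_one σ τ h s]
      _ = _ := Finset.sum_congr rfl fun a ha => by rw [step1 a ha]
  | qreach S' q => exact ho.elim
  | qsafe S' q => exact ho.elim

theorem absorbing_P_eq_zero {s : S} (hab : G.Absorbing s) {a : L} (ha : a ∈ G.Act s)
    {s' : S} (hs' : s' ≠ s) : G.P s a s' = 0 := by
  have h1 := G.P_sum s a ha
  have h2 : G.P s a s + ∑ x ∈ Finset.univ.erase s, G.P s a x = ∑ x, G.P s a x :=
    Finset.add_sum_erase _ _ (Finset.mem_univ s)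
  have h3 : ∑ x ∈ Finset.univ.erase s, G.P s a x = 0 := by
    rw [h1] at h2; rw [hab a ha] at h2; linarith
  exact (Finset.sum_eq_zero_iff_of_nonneg fun x _ => G.P_nonneg s a x).1 h3 s'
    (Finset.mem_erase.2 ⟨hs', Finset.mem_univ _⟩)

theorem absorbing_actionVal {n : ℕ} (v : S → Fin n → ℝ) {s : S} (hab : G.Absorbing s)
    {a : L} (ha : a ∈ G.Act s) : actionVal G v s a = v s := by
  funext i
  unfold actionVal
  rw [Finset.sum_eq_single s
    (fun s' _ hs' => by rw [absorbing_P_eq_zero hab ha hs', zero_mul])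
    (fun hc => absurd (Finset.mem_univ s) hc)]
  rw [hab a ha, one_mul]

theorem md_dirac {σ : Strategy G} (hMD : σ.MD) (s : S) :
    ∃ a ∈ G.Act s, ∀ h b, σ.prob h s b = if b = a then 1 else 0 := by
  obtain ⟨a, ha1⟩ := hMD.2 [] s
  have haAct : a ∈ G.Act s := by
    by_contra hc
    rw [σ.supp [] s a hc] at ha1
    norm_num at ha1
  refine ⟨a, haAct, fun h b => ?_⟩
  have hhist : σ.prob h s b = σ.prob [] s b := congrFun (hMD.1 h [] s) b
  rw [hhist]
  split_ifs with hb
  · rw [hb, ha1]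
  · by_cases hbAct : b ∈ G.Act s
    · have hsum := σ.sum_one [] s
      have h2 : σ.prob [] s a + ∑ x ∈ (G.Act s).erase a, σ.prob [] s x = 1 := by
        rw [Finset.add_sum_erase _ _ haAct, hsum]
      rw [ha1] at h2
      have h3 : ∑ x ∈ (G.Act s).erase a, σ.prob [] s x = 0 := by linarith
      exact (Finset.sum_eq_zero_iff_of_nonneg fun x _ => σ.nonneg [] s x).1 h3 b
        (Finset.mem_erase.2 ⟨hb, hbAct⟩)
    · exact σ.supp [] s b hbAct

/-- The deviation strategy: play `b` at `(s, empty history)`, otherwise follow `π`. -/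
noncomputable def devStrat (π : Strategy G) (s : S) (b : L) (hb : b ∈ G.Act s) :
    Strategy G where
  prob h s' a := if h = [] ∧ s' = s then (if a = b then 1 else 0) else π.prob h s' a
  nonneg h s' a := by split_ifs <;> first | exact π.nonneg h s' a | norm_num
  sum_one h s' := by
    by_cases hc : h = [] ∧ s' = s
    · simp only [hc, and_self, if_true]
      rw [Finset.sum_ite_eq' (G.Act s) b fun _ => (1 : ℝ), if_pos hb]
    · simp only [hc, if_false]
      exact π.sum_one h s'
  supp h s' a ha := by
    by_cases hc : h = [] ∧ s' = s
    · simp only [hc, and_self, if_true]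
      rw [if_neg]
      rintro rfl
      exact ha (by rw [hc.2]; exact hb)
    · simp only [hc, if_false]
      exact π.supp h s' a ha

/-- The shifted strategy: behave as `π` does after the first step `p`. -/
noncomputable def shiftStrat (π : Strategy G) (p : S × L) : Strategy G where
  prob h := π.prob (p :: h)
  nonneg h := π.nonneg _
  sum_one h := π.sum_one _
  supp h := π.supp _

end AuxLemmas

/-- **Lex-optimal MD strategies are locally lex-optimal.**
Let `Ω` be an absorbing lex-objective with lex-value function `v`. If `σ` is a
lex-optimal MD strategy of Max for `Ω` and `τ` is an MD lex-optimal counter-strategy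
of Min against `σ`, then both `σ` and `τ` are locally lex-optimal. -/
theorem lex_optimal_md_locally_optimal {S L : Type} [Fintype S] [DecidableEq S]
    [Nonempty S] [Fintype L] [DecidableEq L] (G : SG S L) {n : ℕ} (Ω : Fin n → Obj S)
    (hplain : ∀ i, (Ω i).Plain) (habs : AbsorbingObj G Ω)
    (v : S → Fin n → ℝ) (hv : ∀ s, IsLexValue G Ω s (v s))
    (σ τ : Strategy G) (hσMD : σ.MD) (hτMD : τ.MD)
    (hσopt : MaxOptimal G Ω σ v) (hτopt : OptimalCounter G Ω σ τ) :
    LocallyOptMax G v σ ∧ LocallyOptMin G v τ := by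
  classical
  -- the payoff of (σ, τ) is the value
  have key : ∀ s, payoff G Ω σ τ [] s = v s := fun s =>
    lexLe_antisymm ((hσopt s).2 _ (hτopt s).1) ((hτopt s).2 _ (hσopt s).1)
  -- history independence of objProb for the memoryless pair (σ, τ)
  have hstepmem : ∀ (h : List (S × L)), ∀ h' s',
      stepProb G σ τ (h ++ h') s' = stepProb G σ τ h' s' := by
    intro h h' s'; funext a; unfold stepProb; split
    exacts [congrFun (hσMD.1 _ _ _) a, congrFun (hτMD.1 _ _ _) a]
  have histind : ∀ (o : Obj S), o.Plain → ∀ (h : List (S × L)) s,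
      objProb G σ τ h s o = objProb G σ τ [] s o := by
    intro o ho h s
    have := objProb_shift (hstepmem h) ho [] s
    simpa using this
  have claim3 : ∀ s a₀, a₀ ∈ G.Act s → (∀ i, s ∉ (Ω i).targets) →
      (∀ c, stepProb G σ τ [] s c = if c = a₀ then 1 else 0) →
      actionVal G v s a₀ = v s := by
    intro s a₀ ha₀ hsT hdir
    funext i
    have h1 : v s i = objProb G σ τ [] s (Ω i) := (congrFun (key s) i).symm
    rw [h1, objProb_unfold σ τ (hplain i) (hsT i) []]
    rw [Finset.sum_eq_single a₀
      (fun c _ hc => by rw [hdir c, if_neg hc, zero_mul])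
      (fun hc => absurd ha₀ hc)]
    rw [hdir a₀, if_pos rfl, one_mul]
    unfold actionVal
    refine Finset.sum_congr rfl fun s' _ => ?_
    congr 1
    rw [histind (Ω i) (hplain i) _ s']
    exact (congrFun (key s') i).symm
  -- deviation bound at Max states
  have claim1 : ∀ s b, b ∈ G.Act s → (∀ i, s ∉ (Ω i).targets) → G.isMax s →
      lexLe (actionVal G v s b) (v s) := by
    intro s b hb hsT hMax
    set σ₂ := devStrat σ s b hb with hσ₂
    have hσ₂prob : ∀ a, σ₂.prob [] s a = if a = b then 1 else 0 := by
      intro a; rw [hσ₂]; simp [devStrat]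
    have hσ₂tail : ∀ (h : List (S × L)) s' a, σ₂.prob ((s, b) :: h) s' a = σ.prob h s' a := by
      intro h s' a; rw [hσ₂]; simp only [devStrat]
      rw [if_neg (by simp)]
      exact congrFun (hσMD.1 _ _ _) a
    -- payoff of σ₂ against any τ'
    have hpay : ∀ τ' : Strategy G, payoff G Ω σ₂ τ' [] s =
        fun i => ∑ s', G.P s b s' * payoff G Ω σ (shiftStrat τ' (s, b)) [] s' i := by
      intro τ'
      funext i
      have hstep : ∀ (h' : List (S × L)) s',
          stepProb G σ₂ τ' ([(s, b)] ++ h') s' = stepProb G σ (shiftStrat τ' (s, b)) h' s' := by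
        intro h' s'; funext a; unfold stepProb; split
        · exact hσ₂tail h' s' a
        · rfl
      have h1 : payoff G Ω σ₂ τ' [] s i = objProb G σ₂ τ' [] s (Ω i) := rfl
      rw [h1, objProb_unfold σ₂ τ' (hplain i) (hsT i) []]
      rw [Finset.sum_eq_single b
        (fun c _ hc => by
          unfold stepProb; rw [if_pos hMax, hσ₂prob c, if_neg hc, zero_mul])
        (fun hc => absurd hb hc)]
      have h2 : stepProb G σ₂ τ' [] s b = 1 := by
        unfold stepProb; rw [if_pos hMax, hσ₂prob b, if_pos rfl]
      rw [h2, one_mul]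
      refine Finset.sum_congr rfl fun s' _ => ?_
      congr 1
      have := objProb_shift hstep (hplain i) [] s'
      simpa [payoff] using this
    -- actionVal is a lower bound of the Min-payoffs of σ₂
    have hlb : IsLexLB (minPayoffs G Ω σ₂ s) (actionVal G v s b) := by
      rintro y ⟨τ', rfl⟩
      rw [hpay τ']
      have hAV : actionVal G v s b = fun i => ∑ s', G.P s b s' * v s' i := rfl
      rw [hAV]
      exact lexLe_sum Finset.univ (G.P s b) _ _ (fun s' _ => G.P_nonneg s b s')
        (fun s' _ => (hσopt s').1 _ ⟨shiftStrat τ' (s, b), rfl⟩)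
    -- actionVal is attained (by τ)
    have hmem : actionVal G v s b ∈ minPayoffs G Ω σ₂ s := by
      refine ⟨τ, ?_⟩
      rw [hpay τ]
      funext i
      unfold actionVal
      refine Finset.sum_congr rfl fun s' _ => ?_
      congr 1
      have hstep2 : ∀ (h' : List (S × L)) s'',
          stepProb G σ (shiftStrat τ (s, b)) ([] ++ h') s'' = stepProb G σ τ h' s'' := by
        intro h' s''; funext a; unfold stepProb; split
        · rfl
        · show τ.prob ((s, b) :: ([] ++ h')) s'' a = τ.prob h' s'' a
          exact congrFun (hτMD.1 _ _ _) a
      have h3 := objProb_shift hstep2 (hplain i) [] s'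
      have h4 : payoff G Ω σ (shiftStrat τ (s, b)) [] s' i
          = objProb G σ (shiftStrat τ (s, b)) [] s' (Ω i) := rfl
      rw [h4]
      have h5 : objProb G σ (shiftStrat τ (s, b)) [] s' (Ω i)
          = objProb G σ τ [] s' (Ω i) := by simpa using h3
      rw [h5]
      exact (congrFun (key s') i).symm
    have hglb : IsLexGLB (minPayoffs G Ω σ₂ s) (actionVal G v s b) :=
      ⟨hlb, fun u hu => hu _ hmem⟩
    exact (hv s).1 _ ⟨σ₂, hglb⟩
  -- deviation bound at Min states
  have claim2 : ∀ s b, b ∈ G.Act s → (∀ i, s ∉ (Ω i).targets) → ¬ G.isMax s →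
      lexLe (v s) (actionVal G v s b) := by
    intro s b hb hsT hMin
    set τ₂ := devStrat τ s b hb with hτ₂
    have hτ₂prob : ∀ a, τ₂.prob [] s a = if a = b then 1 else 0 := by
      intro a; rw [hτ₂]; simp [devStrat]
    have hτ₂tail : ∀ (h : List (S × L)) s' a, τ₂.prob ((s, b) :: h) s' a = τ.prob h s' a := by
      intro h s' a; rw [hτ₂]; simp only [devStrat]
      rw [if_neg (by simp)]
      exact congrFun (hτMD.1 _ _ _) a
    have hstep : ∀ (h' : List (S × L)) s',
        stepProb G σ τ₂ ([(s, b)] ++ h') s' = stepProb G σ τ h' s' := by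
      intro h' s'; funext a; unfold stepProb; split
      · exact congrFun (hσMD.1 _ _ _) a
      · exact hτ₂tail h' s' a
    have hpay : payoff G Ω σ τ₂ [] s = actionVal G v s b := by
      funext i
      have h1 : payoff G Ω σ τ₂ [] s i = objProb G σ τ₂ [] s (Ω i) := rfl
      rw [h1, objProb_unfold σ τ₂ (hplain i) (hsT i) []]
      rw [Finset.sum_eq_single b
        (fun c _ hc => by
          unfold stepProb; rw [if_neg hMin, hτ₂prob c, if_neg hc, zero_mul])
        (fun hc => absurd hb hc)]
      have h2 : stepProb G σ τ₂ [] s b = 1 := by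
        unfold stepProb; rw [if_neg hMin, hτ₂prob b, if_pos rfl]
      rw [h2, one_mul]
      unfold actionVal
      refine Finset.sum_congr rfl fun s' _ => ?_
      congr 1
      have h3 := objProb_shift hstep (hplain i) [] s'
      have h5 : objProb G σ τ₂ [(s, b)] s' (Ω i) = objProb G σ τ [] s' (Ω i) := by
        simpa using h3
      show objProb G σ τ₂ [(s, b)] s' (Ω i) = v s' i
      rw [h5]
      exact congrFun (key s') i
    have := (hσopt s).1 _ ⟨τ₂, rfl⟩
    rwa [hpay] at this
  -- assemble
  constructor
  · intro h s a hMax hpos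
    obtain ⟨a₀, ha₀, hdir⟩ := md_dirac hσMD s
    have haa : a = a₀ := by
      have := hdir h a
      rw [this] at hpos
      by_contra hne
      rw [if_neg hne] at hpos
      exact lt_irrefl 0 hpos
    subst haa
    by_cases habsb : ∃ i, s ∈ (Ω i).targets
    · obtain ⟨i, hi⟩ := habsb
      have hab := habs i s hi
      exact ⟨fun _ b hbAct => by
          rw [absorbing_actionVal v hab hbAct, absorbing_actionVal v hab ha₀]
          exact lexLe_refl _,
        fun _ b hbAct => by
          rw [absorbing_actionVal v hab hbAct, absorbing_actionVal v hab ha₀]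
          exact lexLe_refl _⟩
    · push_neg at habsb
      have hdirS : ∀ c, stepProb G σ τ [] s c = if c = a then 1 else 0 := by
        intro c; unfold stepProb; rw [if_pos hMax]; exact hdir [] c
      have hval : actionVal G v s a = v s := claim3 s a ha₀ habsb hdirS
      refine ⟨fun _ b hbAct => ?_, fun hn => absurd hMax hn⟩
      rw [hval]
      exact claim1 s b hbAct habsb hMax
  · intro h s a hMin hpos
    obtain ⟨a₀, ha₀, hdir⟩ := md_dirac hτMD s
    have haa : a = a₀ := by
      have := hdir h a
      rw [this] at hpos
      by_contra hne
      rw [if_neg hne] at hpos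
      exact lt_irrefl 0 hpos
    subst haa
    by_cases habsb : ∃ i, s ∈ (Ω i).targets
    · obtain ⟨i, hi⟩ := habsb
      have hab := habs i s hi
      exact ⟨fun _ b hbAct => by
          rw [absorbing_actionVal v hab hbAct, absorbing_actionVal v hab ha₀]
          exact lexLe_refl _,
        fun _ b hbAct => by
          rw [absorbing_actionVal v hab hbAct, absorbing_actionVal v hab ha₀]
          exact lexLe_refl _⟩
    · push_neg at habsb
      have hdirS : ∀ c, stepProb G σ τ [] s c = if c = a then 1 else 0 := by
        intro c; unfold stepProb; rw [if_neg hMin]; exact hdir [] c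
      have hval : actionVal G v s a = v s := claim3 s a ha₀ habsb hdirS
      refine ⟨fun hn => absurd hn hMin, fun _ b hbAct => ?_⟩
      rw [hval]
      exact claim2 s b hbAct habsb hMin
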